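/- Let B be a skew left brace, S a subbrace and I an ideal of B such that I is an abelian brace and B = S·I = S + I. Then: (1) I ∩ S is an ideal of B; (2) S is a maximal subbrace of B if and only if I/(I ∩ S) is a chief factor of B (i.e., a minimal ideal of B/(I ∩ S)). -/
import Mathlib


/-- A skew left brace: a set with two group structures `(B,+)` and `(B,·)`
satisfying `a * (b + c) = a * b - a + a * c`. -/
class SkewBrace (B : Type*) extends AddGroup B, Group B where
  mul_add_dist : ∀ a b c : B, a * (b + c) = a * b - a + a * c

namespace SkewBraceDefs

variable {B : Type*} [SkewBrace B]

/-- The lambda map `λ_a(b) = -a + a * b`. -/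
def lam (a b : B) : B := -a + a * b

/-- A subbrace: a subgroup of both group structures. -/
def IsSubbrace (S : Set B) : Prop :=
  (∃ A : AddSubgroup B, (A : Set B) = S) ∧ (∃ M : Subgroup B, (M : Set B) = S)

/-- An ideal: a left ideal that is normal in both groups. -/
def IsIdeal (I : Set B) : Prop :=
  (∃ A : AddSubgroup B, (A : Set B) = I ∧ A.Normal) ∧
  (∃ M : Subgroup B, (M : Set B) = I ∧ M.Normal) ∧
  ∀ b : B, ∀ x ∈ I, lam b x ∈ I

/-- A maximal subbrace. -/
def IsMaximalSubbrace (S : Set B) : Prop :=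
  IsSubbrace S ∧ S ≠ Set.univ ∧
    ∀ T : Set B, IsSubbrace T → S ⊆ T → T = S ∨ T = Set.univ

/-- The centre `ζ(B) = {a | a + b = b + a = a·b = b·a for all b}` of a skew brace. -/
def zeta (B : Type*) [SkewBrace B] : Set B :=
  {a : B | ∀ b : B, a + b = b + a ∧ a * b = a + b ∧ b * a = a + b}

/-- The commutator `[I,J]`: the smallest ideal containing additive commutators,
multiplicative commutators, and the elements `i * j - (i + j)`. -/
def commIdeal (I J : Set B) : Set B :=
  ⋂₀ {K : Set B | IsIdeal K ∧ ∀ i ∈ I, ∀ j ∈ J,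
      i + j - i - j ∈ K ∧ i * j * i⁻¹ * j⁻¹ ∈ K ∧ i * j - (i + j) ∈ K}

/-- The Frattini subbrace: intersection of all maximal subbraces
(`Set.univ` if there are none). -/
def Frattini (B : Type*) [SkewBrace B] : Set B :=
  ⋂₀ {S : Set B | IsMaximalSubbrace S}

/-- `I` is an ideal of the subbrace `S`. -/
def IsIdealOf (I S : Set B) : Prop :=
  I ⊆ S ∧ (0 : B) ∈ I ∧ (∀ x ∈ I, ∀ y ∈ I, x + y ∈ I) ∧ (∀ x ∈ I, -x ∈ I) ∧
  (∀ x ∈ I, ∀ y ∈ I, x * y ∈ I) ∧ (∀ x ∈ I, x⁻¹ ∈ I) ∧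
  (∀ s ∈ S, ∀ x ∈ I, s + x - s ∈ I) ∧ (∀ s ∈ S, ∀ x ∈ I, s * x * s⁻¹ ∈ I) ∧
  (∀ s ∈ S, ∀ x ∈ I, lam s x ∈ I)

/-- An abelian ideal series `B = I 0 ⊇ I 1 ⊇ ... ⊇ I n = 0`, each `I (i+1)` an
ideal of `I i` with abelian factor brace `I i / I (i+1)`. -/
def IsAbelianSeries (I : ℕ → Set B) (n : ℕ) : Prop :=
  I 0 = Set.univ ∧ I n = {0} ∧
  ∀ i < n, IsIdealOf (I (i + 1)) (I i) ∧
    ∀ a ∈ I i, ∀ b ∈ I i,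
      -(b + a) + (a + b) ∈ I (i + 1) ∧ -(a + b) + a * b ∈ I (i + 1)

/-- Solubility of a skew brace: existence of an abelian ideal series. -/
def IsSoluble (B : Type*) [SkewBrace B] : Prop :=
  ∃ n : ℕ, ∃ I : ℕ → Set B, IsAbelianSeries I n

/-- The derived series `∂_0(B) = B`, `∂_{n+1}(B) = [∂_n(B), ∂_n(B)]`. -/
def derivedSeries (B : Type*) [SkewBrace B] : ℕ → Set B
  | 0 => Set.univ
  | n + 1 => commIdeal (derivedSeries B n) (derivedSeries B n)

end SkewBraceDefs

open SkewBraceDefs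

section Aux
open SkewBraceDefs
variable {B : Type*} [SkewBrace B]

private lemma sb_one_eq_zero : (1 : B) = 0 := by
  have h := SkewBrace.mul_add_dist (1 : B) 0 0
  simp only [one_mul, add_zero, zero_sub] at h
  exact (neg_eq_zero.mp h.symm)

private lemma sb_mul_eq_add_lam (a b : B) : a * b = a + lam a b := by
  unfold SkewBraceDefs.lam
  exact (add_neg_cancel_left a (a * b)).symm

private lemma sb_lam_add (a b c : B) : lam a (b + c) = lam a b + lam a c := by
  unfold SkewBraceDefs.lam
  rw [SkewBrace.mul_add_dist]
  simp [sub_eq_add_neg, add_assoc]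

private lemma sb_lam_mul (a b c : B) : lam (a * b) c = lam a (lam b c) := by
  have h1 : (a * b) * c = a * b + lam (a * b) c := sb_mul_eq_add_lam _ _
  have h4 : a * (b * c) = a * b + lam a (lam b c) := by
    rw [sb_mul_eq_add_lam a (b * c), sb_mul_eq_add_lam b c, sb_lam_add, ← add_assoc,
      ← sb_mul_eq_add_lam]
  rw [mul_assoc, h4] at h1
  exact (add_left_cancel h1).symm

private lemma sb_lam_one (b : B) : lam 1 b = b := by
  unfold SkewBraceDefs.lam
  rw [one_mul, sb_one_eq_zero, neg_zero, zero_add]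

private lemma sb_lam_lam_inv (a b : B) : lam a (lam a⁻¹ b) = b := by
  rw [← sb_lam_mul, mul_inv_cancel, sb_lam_one]

private lemma subbrace_ops {S : Set B} (hS : IsSubbrace S) :
    (0 : B) ∈ S ∧ (∀ x ∈ S, ∀ y ∈ S, x + y ∈ S) ∧ (∀ x ∈ S, -x ∈ S) ∧
    (∀ x ∈ S, ∀ y ∈ S, x * y ∈ S) ∧ (∀ x ∈ S, x⁻¹ ∈ S) := by
  obtain ⟨⟨A, hA⟩, ⟨M, hM⟩⟩ := hS
  have hAm : ∀ x : B, x ∈ A → x ∈ S := fun x hx => by rw [← hA]; exact hx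
  have hmA : ∀ x : B, x ∈ S → x ∈ A := fun x hx => by rw [← hA] at hx; exact hx
  have hMm : ∀ x : B, x ∈ M → x ∈ S := fun x hx => by rw [← hM]; exact hx
  have hmM : ∀ x : B, x ∈ S → x ∈ M := fun x hx => by rw [← hM] at hx; exact hx
  exact ⟨hAm _ A.zero_mem,
    fun x hx y hy => hAm _ (A.add_mem (hmA _ hx) (hmA _ hy)),
    fun x hx => hAm _ (A.neg_mem (hmA _ hx)),
    fun x hx y hy => hMm _ (M.mul_mem (hmM _ hx) (hmM _ hy)),
    fun x hx => hMm _ (M.inv_mem (hmM _ hx))⟩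

private lemma ideal_ops {I : Set B} (hI : IsIdeal I) :
    (0 : B) ∈ I ∧ (∀ x ∈ I, ∀ y ∈ I, x + y ∈ I) ∧ (∀ x ∈ I, -x ∈ I) ∧
    (∀ x ∈ I, ∀ y ∈ I, x * y ∈ I) ∧ (∀ x ∈ I, x⁻¹ ∈ I) ∧
    (∀ g : B, ∀ x ∈ I, g + x + -g ∈ I) ∧ (∀ g : B, ∀ x ∈ I, g * x * g⁻¹ ∈ I) ∧
    (∀ b : B, ∀ x ∈ I, lam b x ∈ I) := by
  obtain ⟨⟨A, hA, hAn⟩, ⟨M, hM, hMn⟩, hlam⟩ := hI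
  have hAm : ∀ x : B, x ∈ A → x ∈ I := fun x hx => by rw [← hA]; exact hx
  have hmA : ∀ x : B, x ∈ I → x ∈ A := fun x hx => by rw [← hA] at hx; exact hx
  have hMm : ∀ x : B, x ∈ M → x ∈ I := fun x hx => by rw [← hM]; exact hx
  have hmM : ∀ x : B, x ∈ I → x ∈ M := fun x hx => by rw [← hM] at hx; exact hx
  exact ⟨hAm _ A.zero_mem,
    fun x hx y hy => hAm _ (A.add_mem (hmA _ hx) (hmA _ hy)),
    fun x hx => hAm _ (A.neg_mem (hmA _ hx)),
    fun x hx y hy => hMm _ (M.mul_mem (hmM _ hx) (hmM _ hy)),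
    fun x hx => hMm _ (M.inv_mem (hmM _ hx)),
    fun g x hx => hAm _ (hAn.conj_mem x (hmA _ hx) g),
    fun g x hx => hMm _ (hMn.conj_mem x (hmM _ hx) g),
    hlam⟩

private lemma aux_inter (S I : Set B) (hS : IsSubbrace S) (hI : IsIdeal I)
    (hIab : ∀ x ∈ I, ∀ y ∈ I, x * y = x + y ∧ x + y = y + x)
    (hmul : ∀ b : B, ∃ s ∈ S, ∃ i ∈ I, b = s * i) :
    IsIdeal (I ∩ S) := by
  obtain ⟨hS0, hSadd, hSneg, hSmul, hSinv⟩ := subbrace_ops hS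
  obtain ⟨hI0, hIadd, hIneg, hImul, hIinv, hIca, hIcm, hIlam⟩ := ideal_ops hI
  have hlam_fix : ∀ i ∈ I, ∀ x ∈ I, lam i x = x := by
    intro i hi x hx
    unfold SkewBraceDefs.lam
    rw [(hIab i hi x hx).1, neg_add_cancel_left]
  have hconj_add : ∀ i ∈ I, ∀ x ∈ I, i + x + -i = x := by
    intro i hi x hx
    rw [(hIab i hi x hx).2, add_neg_cancel_right]
  have hconj_mul : ∀ i ∈ I, ∀ x ∈ I, i * x * i⁻¹ = x := by
    intro i hi x hx
    have h : i * x = x * i := by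
      rw [(hIab i hi x hx).1, (hIab i hi x hx).2, ← (hIab x hx i hi).1]
    rw [h, mul_inv_cancel_right]
  obtain ⟨⟨A, hA, hAn⟩, ⟨M, hM, hMn⟩, _⟩ := hI
  obtain ⟨⟨AS, hAS⟩, ⟨MS, hMS⟩⟩ := hS
  have hImem : ∀ x : B, x ∈ A ⊓ AS ↔ x ∈ I ∩ S := by
    intro x
    rw [AddSubgroup.mem_inf]
    constructor
    · rintro ⟨h1, h2⟩
      exact ⟨by rw [← hA]; exact h1, by rw [← hAS]; exact h2⟩
    · rintro ⟨h1, h2⟩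
      exact ⟨by rw [← hA] at h1; exact h1, by rw [← hAS] at h2; exact h2⟩
  have hMmem : ∀ x : B, x ∈ M ⊓ MS ↔ x ∈ I ∩ S := by
    intro x
    rw [Subgroup.mem_inf]
    constructor
    · rintro ⟨h1, h2⟩
      exact ⟨by rw [← hM]; exact h1, by rw [← hMS]; exact h2⟩
    · rintro ⟨h1, h2⟩
      exact ⟨by rw [← hM] at h1; exact h1, by rw [← hMS] at h2; exact h2⟩
  refine ⟨⟨A ⊓ AS, ?_, ?_⟩, ⟨M ⊓ MS, ?_, ?_⟩, ?_⟩
  · ext x; exact hImem x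
  · constructor
    intro n hn g
    obtain ⟨hnI, hnS⟩ := (hImem n).mp hn
    obtain ⟨s, hsS, i, hiI, rfl⟩ := hmul g
    apply (hImem _).mpr
    have hlsi : lam s i ∈ I := hIlam s i hiI
    have key : s * i + n + -(s * i) = s + n + -s := by
      rw [sb_mul_eq_add_lam s i]
      have h5 : lam s i + n + -(lam s i) = n := hconj_add _ hlsi n hnI
      calc s + lam s i + n + -(s + lam s i)
          = s + (lam s i + n + -(lam s i)) + -s := by
            simp only [neg_add_rev, add_assoc]
        _ = s + n + -s := by rw [h5]
    rw [key]
    exact ⟨hIca s n hnI, hSadd _ (hSadd _ hsS _ hnS) _ (hSneg _ hsS)⟩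
  · ext x; exact hMmem x
  · constructor
    intro n hn g
    obtain ⟨hnI, hnS⟩ := (hMmem n).mp hn
    obtain ⟨s, hsS, i, hiI, rfl⟩ := hmul g
    apply (hMmem _).mpr
    have key : (s * i) * n * (s * i)⁻¹ = s * n * s⁻¹ := by
      have h5 : i * n * i⁻¹ = n := hconj_mul i hiI n hnI
      calc (s * i) * n * (s * i)⁻¹
          = s * (i * n * i⁻¹) * s⁻¹ := by
            simp only [mul_inv_rev, mul_assoc]
        _ = s * n * s⁻¹ := by rw [h5]
    rw [key]
    exact ⟨hIcm s n hnI, hSmul _ (hSmul _ hsS _ hnS) _ (hSinv _ hsS)⟩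
  · intro b x hx
    obtain ⟨s, hsS, i, hiI, rfl⟩ := hmul b
    rw [sb_lam_mul, hlam_fix i hiI x hx.1]
    refine ⟨hIlam s x hx.1, ?_⟩
    show lam s x ∈ S
    unfold SkewBraceDefs.lam
    exact hSadd _ (hSneg _ hsS) _ (hSmul _ hsS _ hx.2)

private lemma sum_props (S K : Set B) (hS : IsSubbrace S) (hK : IsIdeal K) :
    IsSubbrace {x : B | ∃ s ∈ S, ∃ k ∈ K, x = s + k} ∧
    (∀ x : B, (∃ s ∈ S, ∃ k ∈ K, x = s + k) ↔ (∃ s ∈ S, ∃ k ∈ K, x = s * k)) := by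
  obtain ⟨hS0, hSadd, hSneg, hSmul, hSinv⟩ := subbrace_ops hS
  obtain ⟨hK0, hKadd, hKneg, hKmul, hKinv, hKca, hKcm, hKlam⟩ := ideal_ops hK
  have hiff : ∀ x : B, (∃ s ∈ S, ∃ k ∈ K, x = s + k) ↔ (∃ s ∈ S, ∃ k ∈ K, x = s * k) := by
    intro x
    constructor
    · rintro ⟨s, hs, k, hk, rfl⟩
      exact ⟨s, hs, lam s⁻¹ k, hKlam _ _ hk,
        by rw [sb_mul_eq_add_lam, sb_lam_lam_inv]⟩
    · rintro ⟨s, hs, k, hk, rfl⟩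
      exact ⟨s, hs, lam s k, hKlam _ _ hk, sb_mul_eq_add_lam s k⟩
  refine ⟨⟨⟨{ carrier := {x : B | ∃ s ∈ S, ∃ k ∈ K, x = s + k},
              add_mem' := ?_, zero_mem' := ?_, neg_mem' := ?_ }, rfl⟩,
           ⟨{ carrier := {x : B | ∃ s ∈ S, ∃ k ∈ K, x = s + k},
              mul_mem' := ?_, one_mem' := ?_, inv_mem' := ?_ }, rfl⟩⟩, hiff⟩
  · rintro a b ⟨s, hs, k, hk, rfl⟩ ⟨s', hs', k', hk', rfl⟩
    refine ⟨s + s', hSadd _ hs _ hs', (-s' + k + s') + k', hKadd _ ?_ _ hk', ?_⟩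
    · have h := hKca (-s') k hk
      rwa [neg_neg] at h
    · simp [add_assoc]
  · exact ⟨0, hS0, 0, hK0, (add_zero 0).symm⟩
  · rintro a ⟨s, hs, k, hk, rfl⟩
    refine ⟨-s, hSneg _ hs, s + -k + -s, hKca s (-k) (hKneg _ hk), ?_⟩
    simp [neg_add_rev, add_assoc]
  · intro a b ha hb
    obtain ⟨s, hs, k, hk, rfl⟩ := (hiff a).mp ha
    obtain ⟨s', hs', k', hk', rfl⟩ := (hiff b).mp hb
    refine (hiff _).mpr ⟨s * s', hSmul _ hs _ hs', (s'⁻¹ * k * s') * k', hKmul _ ?_ _ hk', ?_⟩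
    · have h := hKcm s'⁻¹ k hk
      rwa [inv_inv] at h
    · simp [mul_assoc]
  · exact ⟨0, hS0, 0, hK0, by rw [sb_one_eq_zero, add_zero]⟩
  · intro a ha
    obtain ⟨s, hs, k, hk, rfl⟩ := (hiff a).mp ha
    refine (hiff _).mpr ⟨s⁻¹, hSinv _ hs, s * k⁻¹ * s⁻¹, hKcm s k⁻¹ (hKinv _ hk), ?_⟩
    simp [mul_inv_rev, mul_assoc]

end Aux


/-- Let `S` be a subbrace and `I` an abelian ideal of `B` with `B = S·I = S + I`.
Then (1) `I ∩ S` is an ideal of `B`; (2) `S` is a maximal subbrace iff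
`I/(I ∩ S)` is a chief factor of `B`. -/
theorem statement15 (B : Type*) [SkewBrace B] (S I : Set B)
    (hS : IsSubbrace S) (hI : IsIdeal I)
    (hIab : ∀ x ∈ I, ∀ y ∈ I, x * y = x + y ∧ x + y = y + x)
    (hmul : ∀ b : B, ∃ s ∈ S, ∃ i ∈ I, b = s * i)
    (hadd : ∀ b : B, ∃ s ∈ S, ∃ i ∈ I, b = s + i) :
    IsIdeal (I ∩ S) ∧
    (IsMaximalSubbrace S ↔
      (I ∩ S ≠ I ∧ ∀ K : Set B, IsIdeal K → I ∩ S ⊆ K → K ⊆ I →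
        K = I ∩ S ∨ K = I)) := by
  obtain ⟨hS0, hSadd, hSneg, hSmul, hSinv⟩ := subbrace_ops hS
  obtain ⟨hI0, hIadd, hIneg, hImul, hIinv, hIca, hIcm, hIlam⟩ := ideal_ops hI
  refine ⟨aux_inter S I hS hI hIab hmul, ?_, ?_⟩
  · rintro ⟨hSsub, hSne, hSmax⟩
    have hISne : I ∩ S ≠ I := by
      intro hEq
      apply hSne
      have hIS : I ⊆ S := by
        intro x hx
        have h : x ∈ I ∩ S := by rw [hEq]; exact hx
        exact h.2
      apply Set.eq_univ_of_forall
      intro b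
      obtain ⟨s, hs, i, hi, rfl⟩ := hadd b
      exact hSadd _ hs _ (hIS hi)
    refine ⟨hISne, ?_⟩
    intro K hK hISK hKI
    obtain ⟨hK0, hKadd, hKneg, hKmul, hKinv, hKca, hKcm, hKlam⟩ := ideal_ops hK
    obtain ⟨hTsub, hTiff⟩ := sum_props S K hS hK
    set T := {x : B | ∃ s ∈ S, ∃ k ∈ K, x = s + k} with hTdef
    have hST : S ⊆ T := fun s hs => ⟨s, hs, 0, hK0, (add_zero s).symm⟩
    rcases hSmax T hTsub hST with hTS | hTuniv
    · left
      apply Set.Subset.antisymm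
      · intro k hk
        refine ⟨hKI hk, ?_⟩
        have h : k ∈ T := ⟨0, hS0, k, hk, (zero_add k).symm⟩
        rw [hTS] at h
        exact h
      · exact hISK
    · right
      apply Set.Subset.antisymm hKI
      intro i hi
      have hiT : i ∈ T := by rw [hTuniv]; trivial
      obtain ⟨s, hs, k, hk, hik⟩ := hiT
      have hsI : s ∈ I := by
        have h : s = i + -k := by rw [hik, add_neg_cancel_right]
        rw [h]
        exact hIadd _ hi _ (hIneg _ (hKI hk))
      have hsK : s ∈ K := hISK ⟨hsI, hs⟩
      rw [hik]
      exact hKadd _ hsK _ hk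
  · rintro ⟨hne, hmin⟩
    refine ⟨hS, ?_, ?_⟩
    · intro hSuniv
      apply hne
      rw [hSuniv, Set.inter_univ]
    · intro T hT hSsubT
      obtain ⟨hT0, hTadd, hTneg, hTmul, hTinv⟩ := subbrace_ops hT
      have hmulT : ∀ b : B, ∃ s ∈ T, ∃ i ∈ I, b = s * i := by
        intro b
        obtain ⟨s, hs, i, hi, h⟩ := hmul b
        exact ⟨s, hSsubT hs, i, hi, h⟩
      have hIT := aux_inter T I hT hI hIab hmulT
      have hsub1 : I ∩ S ⊆ I ∩ T := fun x hx => ⟨hx.1, hSsubT hx.2⟩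
      have hsub2 : I ∩ T ⊆ I := fun x hx => hx.1
      rcases hmin (I ∩ T) hIT hsub1 hsub2 with hcase | hcase
      · left
        apply Set.Subset.antisymm ?_ hSsubT
        intro t ht
        obtain ⟨s, hs, i, hi, hti⟩ := hadd t
        have hiT : i ∈ T := by
          have h : i = -s + t := by rw [hti, neg_add_cancel_left]
          rw [h]
          exact hTadd _ (hTneg _ (hSsubT hs)) _ ht
        have hiS : i ∈ I ∩ S := by rw [← hcase]; exact ⟨hi, hiT⟩
        rw [hti]
        exact hSadd _ hs _ hiS.2
      · right
        have hIsubT : I ⊆ T := by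
          intro x hx
          have h : x ∈ I ∩ T := by rw [hcase]; exact hx
          exact h.2
        apply Set.eq_univ_of_forall
        intro b
        obtain ⟨s, hs, i, hi, rfl⟩ := hadd b
        exact hTadd _ (hSsubT hs) _ (hIsubT hi)
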